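/- Fix ε ∈ (0,1/2). Let G be the complete graph K4 on vertices {1,2,3,4}, with outer edges {12,23,34,41} each given activation probability (1−ε)/2 and diagonal edges {13,24} each given activation probability ε; call this vector x. For α ∈ (0,1), let μ* be the unique maximum-entropy probability distribution over the matchings of K4 with marginals p_e = α x_e for every edge e. If μ* satisfies the stationary implementability constraints P_{S∼μ*}[e ∈ S | S∖{e} = T] ≤ x_e for every edge e and every matching T with e ∉ T and P[S∖{e} = T] > 0, then the corresponding α satisfy limsup_{ε→0} α ≤ (√3−1)/2. Equivalently: for every δ > 0 there exists ε0 > 0 such that for all ε < ε0 any α with this property is at most (√3−1)/2+δ. In particular, the maximum-entropy method cannot certify a stationary selectability constant larger than (√3−1)/2 ≈ 0.366 for general (non-bipartite) matchings. -/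

import Mathlib

open Finset

namespace Stmt18

/-- The four outer edges of K4 (viewed as a 4-cycle 1-2-3-4). -/
def outerEdges : Finset (Finset (Fin 4)) := {{0, 1}, {1, 2}, {2, 3}, {3, 0}}

/-- The two diagonal edges of K4. -/
def diagEdges : Finset (Finset (Fin 4)) := {{0, 2}, {1, 3}}

/-- The six edges of K4. -/
def edges : Finset (Finset (Fin 4)) := outerEdges ∪ diagEdges

/-- A matching of K4: a set of pairwise vertex-disjoint edges. -/
def IsK4Matching (M : Finset (Finset (Fin 4))) : Prop :=
  M ⊆ edges ∧ ∀ a ∈ M, ∀ b ∈ M, a ≠ b → Disjoint a b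

/-- Activation probabilities: ε on diagonals, (1−ε)/2 on outer edges. -/
noncomputable def xvec (ε : ℝ) (e : Finset (Fin 4)) : ℝ :=
  if e ∈ diagEdges then ε else (1 - ε) / 2

/-- `μ` is a probability distribution on the matchings of K4 with marginals `α · x(ε)`. -/
def Feasible (ε α : ℝ) (μ : Finset (Finset (Fin 4)) → ℝ) : Prop :=
  (∀ M, 0 ≤ μ M) ∧
  (∑ M : Finset (Finset (Fin 4)), μ M) = 1 ∧
  (∀ M, μ M ≠ 0 → IsK4Matching M) ∧
  (∀ e ∈ edges, ∑ M ∈ univ.filter (fun M => e ∈ M), μ M = α * xvec ε e)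

/-- The Shannon entropy of `μ`. -/
noncomputable def entropy (μ : Finset (Finset (Fin 4)) → ℝ) : ℝ :=
  -∑ M : Finset (Finset (Fin 4)), μ M * Real.log (μ M)

end Stmt18

set_option maxHeartbeats 1000000
set_option maxRecDepth 10000


open Stmt18

lemma sum_loc (F : Finset (Finset (Fin 4)) → ℝ) (L : Finset (Finset (Finset (Fin 4))))
    (h : ∀ M, F M ≠ 0 → M ∈ L) : ∑ M, F M = ∑ M ∈ L, F M := by
  refine (Finset.sum_subset (Finset.subset_univ L) ?_).symm
  intro M _ hM
  by_contra h0
  exact hM (h M h0)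

lemma sum_loc_filter (P : Finset (Finset (Fin 4)) → Prop) [DecidablePred P]
    (F : Finset (Finset (Fin 4)) → ℝ) (L : Finset (Finset (Finset (Fin 4))))
    (h : ∀ M, F M ≠ 0 → M ∈ L) :
    ∑ M ∈ univ.filter P, F M = ∑ M ∈ L.filter P, F M := by
  refine (Finset.sum_subset (Finset.filter_subset_filter _ (Finset.subset_univ L)) ?_).symm
  intro M hM hM'
  by_contra h0
  exact hM' (Finset.mem_filter.2 ⟨h M h0, (Finset.mem_filter.1 hM).2⟩)

/-- convexity lower bound for x log x decrement -/
lemma flog_lower (z d : ℝ) (hz : 0 < z) (hd : 0 < d) (hdz : d < z) :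
    d * (Real.log (z - d) + 1) ≤ z * Real.log z - (z - d) * Real.log (z - d) := by
  have hp : 0 < z - d := by linarith
  have h1 : Real.log ((z - d) / z) ≤ (z - d) / z - 1 :=
    Real.log_le_sub_one_of_pos (by positivity)
  rw [Real.log_div (by positivity) (by positivity)] at h1
  have h2 : z * (Real.log (z - d) - Real.log z) ≤ z * ((z - d) / z - 1) :=
    mul_le_mul_of_nonneg_left h1 hz.le
  have h3 : z * ((z - d) / z - 1) = -d := by field_simp; ring
  nlinarith [h2]

/-- convexity upper bound for x log x increment -/
lemma flog_upper (u d : ℝ) (hu : 0 ≤ u) (hd : 0 < d) :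
    (u + d) * Real.log (u + d) - u * Real.log u ≤ d * (Real.log (u + d) + 1) := by
  rcases eq_or_lt_of_le hu with h | h
  · rw [← h]
    simp only [zero_add, zero_mul, sub_zero]
    nlinarith [hd]
  · have h1 : Real.log ((u + d) / u) ≤ (u + d) / u - 1 :=
      Real.log_le_sub_one_of_pos (by positivity)
    rw [Real.log_div (by positivity) (by positivity)] at h1
    have h2 : u * (Real.log (u + d) - Real.log u) ≤ u * ((u + d) / u - 1) :=
      mul_le_mul_of_nonneg_left h1 h.le
    have h3 : u * ((u + d) / u - 1) = d := by field_simp; ring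
    nlinarith [h2]

lemma marg_two (μ : Finset (Finset (Fin 4)) → ℝ)
    (hsupp : ∀ M, μ M ≠ 0 → IsK4Matching M)
    (e e' : Finset (Fin 4)) (hne : e ≠ e')
    (hcov : ∀ f ∈ edges, Disjoint e f → f = e') :
    ∑ M ∈ univ.filter (fun M => e ∈ M), μ M = μ {e} + μ ({e, e'}) := by
  have hpairne : ({e} : Finset (Finset (Fin 4))) ≠ {e, e'} := by
    intro h
    have : e' ∈ ({e} : Finset (Finset (Fin 4))) := h ▸ Finset.mem_insert_of_mem (Finset.mem_singleton_self e')
    exact hne ((Finset.mem_singleton.1 this).symm)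
  have hsub : ({ {e}, {e, e'} } : Finset (Finset (Finset (Fin 4)))) ⊆
      univ.filter (fun M => e ∈ M) := by
    intro N hN
    simp only [Finset.mem_insert, Finset.mem_singleton] at hN
    rcases hN with rfl | rfl <;> simp [Finset.mem_filter]
  rw [← Finset.sum_subset hsub ?_, Finset.sum_pair hpairne]
  intro N hNf hNp
  by_contra h0
  have hm := hsupp N h0
  have heN : e ∈ N := (Finset.mem_filter.1 hNf).2
  have hNsub : ∀ f ∈ N, f = e ∨ f = e' := by
    intro f hf
    rcases eq_or_ne f e with rfl | hfe
    · exact Or.inl rfl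
    · exact Or.inr (hcov f (hm.1 hf) (hm.2 e heN f hf (Ne.symm hfe)))
  simp only [Finset.mem_insert, Finset.mem_singleton] at hNp
  push_neg at hNp
  by_cases he' : e' ∈ N
  · refine hNp.2 (Finset.Subset.antisymm ?_ ?_)
    · intro f hf
      rcases hNsub f hf with rfl | rfl <;> simp
    · intro f hf
      simp only [Finset.mem_insert, Finset.mem_singleton] at hf
      rcases hf with rfl | rfl
      · exact heN
      · exact he'
  · refine hNp.1 (Finset.Subset.antisymm ?_ (Finset.singleton_subset_iff.2 heN))
    intro f hf
    rcases hNsub f hf with rfl | rfl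
    · simp
    · exact absurd hf he'

lemma gibbs_ineq (ε α : ℝ) (μ : Finset (Finset (Fin 4)) → ℝ)
    (hfeas : Feasible ε α μ)
    (hmax : ∀ ν, Feasible ε α ν → entropy ν ≤ entropy μ)
    (a b : Finset (Fin 4)) (ha : a ∈ edges) (hb : b ∈ edges)
    (hab : a ≠ b) (hd : Disjoint a b) :
    μ ∅ * μ ({a, b}) ≤ μ {a} * μ {b} := by
  by_contra hcon
  push_neg at hcon
  obtain ⟨hpos, hsum, hsupp, hmarg⟩ := hfeas
  set z := μ ∅ with hzdef
  set u := μ {a} with hudef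
  set v := μ {b} with hvdef
  set w := μ ({a, b}) with hwdef
  have hu0 : 0 ≤ u := hpos _
  have hv0 : 0 ≤ v := hpos _
  have hz0 : 0 ≤ z := hpos _
  have hw0 : 0 ≤ w := hpos _
  have hzw : 0 < z * w := lt_of_le_of_lt (mul_nonneg hu0 hv0) hcon
  have hz : 0 < z := by
    rcases mul_pos_iff.1 hzw with ⟨h1, _⟩ | ⟨h1, _⟩
    · exact h1
    · linarith
  have hw : 0 < w := by
    rcases mul_pos_iff.1 hzw with ⟨_, h2⟩ | ⟨_, h2⟩
    · exact h2
    · linarith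
  set γ := z * w - u * v with hγdef
  have hγ : 0 < γ := by simp only [hγdef]; linarith
  set S : ℝ := u + v + z + w + 1 with hSdef
  have hS : 0 < S := by positivity
  set d : ℝ := min (min (z / 2) (w / 2)) (γ / (2 * S)) with hddef
  have hdpos : 0 < d := by
    simp only [hddef]
    refine lt_min (lt_min (by positivity) (by positivity)) (by positivity)
  have hdz : d ≤ z / 2 := le_trans (min_le_left _ _) (min_le_left _ _)
  have hdw : d ≤ w / 2 := le_trans (min_le_left _ _) (min_le_right _ _)
  have hdγ : d * (2 * S) ≤ γ := by
    have := min_le_right (min (z / 2) (w / 2)) (γ / (2 * S))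
    calc d * (2 * S) ≤ (γ / (2 * S)) * (2 * S) :=
          mul_le_mul_of_nonneg_right (hddef ▸ this) (by positivity)
      _ = γ := by field_simp
  -- the four modified matchings
  have hne1 : ({a} : Finset (Finset (Fin 4))) ≠ ∅ := Finset.singleton_ne_empty a
  have hne2 : ({b} : Finset (Finset (Fin 4))) ≠ ∅ := Finset.singleton_ne_empty b
  have hne3 : ({a, b} : Finset (Finset (Fin 4))) ≠ ∅ :=
    Finset.ne_empty_of_mem (Finset.mem_insert_self a {b})
  have hne4 : ({a} : Finset (Finset (Fin 4))) ≠ {b} := by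
    intro h
    exact hab (Finset.singleton_injective h)
  have hne5 : ({a} : Finset (Finset (Fin 4))) ≠ {a, b} := by
    intro h
    have : b ∈ ({a} : Finset (Finset (Fin 4))) := h ▸ Finset.mem_insert_of_mem (Finset.mem_singleton_self b)
    exact hab (Finset.mem_singleton.1 this).symm
  have hne6 : ({b} : Finset (Finset (Fin 4))) ≠ {a, b} := by
    intro h
    have : a ∈ ({b} : Finset (Finset (Fin 4))) := h ▸ Finset.mem_insert_self a {b}
    exact hab (Finset.mem_singleton.1 this)
  -- the perturbed distribution
  set ν : Finset (Finset (Fin 4)) → ℝ := fun M =>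
    if M = ∅ then z - d else if M = {a} then u + d else if M = {b} then v + d
    else if M = ({a, b}) then w - d else μ M with hνdef
  have hν1 : ν ∅ = z - d := by simp [hνdef]
  have hν2 : ν {a} = u + d := by simp [hνdef, hne1]
  have hν3 : ν {b} = v + d := by simp [hνdef, hne2, hne4.symm]
  have hν4 : ν ({a, b}) = w - d := by simp [hνdef, hne3, hne5.symm, hne6.symm]
  have hρ : ∀ M, M ≠ ∅ → M ≠ {a} → M ≠ {b} → M ≠ ({a, b}) → ν M = μ M := by
    intro M h1 h2 h3 h4
    simp [hνdef, h1, h2, h3, h4]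
  set L4 : Finset (Finset (Finset (Fin 4))) := {∅, {a}, {b}, {a, b}} with hL4def
  have hL4mem : ∀ M, M ∉ L4 → ν M = μ M := by
    intro M hM
    simp only [hL4def, Finset.mem_insert, Finset.mem_singleton] at hM
    push_neg at hM
    exact hρ M hM.1.ne_empty hM.2.1 hM.2.2.1 hM.2.2.2
  -- sums over L4
  have hL4sum : ∀ F : Finset (Finset (Fin 4)) → ℝ,
      ∑ M ∈ L4, F M = F ∅ + F {a} + F {b} + F ({a, b}) := by
    intro F
    simp only [hL4def]
    rw [Finset.sum_insert (by simp [hne1.symm, hne2.symm, hne3.symm]),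
      Finset.sum_insert (by simp [hne4, hne5]),
      Finset.sum_insert (by simp [hne6]), Finset.sum_singleton]
    ring
  -- ν is feasible
  have hνfeas : Feasible ε α ν := by
    refine ⟨?_, ?_, ?_, ?_⟩
    · intro M
      by_cases h1 : M = ∅
      · rw [h1, hν1]; linarith
      by_cases h2 : M = {a}
      · rw [h2, hν2]; linarith
      by_cases h3 : M = {b}
      · rw [h3, hν3]; linarith
      by_cases h4 : M = ({a, b})
      · rw [h4, hν4]; linarith
      · rw [hρ M h1 h2 h3 h4]; exact hpos M
    · have hdiff : ∑ M : Finset (Finset (Fin 4)), (ν M - μ M) = 0 := by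
        rw [sum_loc (fun M => ν M - μ M) L4 ?_]
        · rw [hL4sum (fun M => ν M - μ M)]
          rw [hν1, hν2, hν3, hν4, ← hzdef, ← hudef, ← hvdef, ← hwdef]
          ring
        · intro M hM
          by_contra hnot
          exact hM (by show _ - _ = (0:ℝ); rw [hL4mem M hnot]; ring)
      have hh : ∑ M : Finset (Finset (Fin 4)), ν M
          = ∑ M : Finset (Finset (Fin 4)), μ M + ∑ M : Finset (Finset (Fin 4)), (ν M - μ M) := by
        rw [← Finset.sum_add_distrib]
        exact Finset.sum_congr rfl (fun M _ => by ring)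
      rw [hh, hsum, hdiff]; ring
    · intro M hM
      by_cases h1 : M = ∅
      · subst h1
        exact ⟨Finset.empty_subset _, by simp⟩
      by_cases h2 : M = {a}
      · subst h2
        refine ⟨Finset.singleton_subset_iff.2 ha, ?_⟩
        intro x hx y hy hxy
        simp only [Finset.mem_singleton] at hx hy
        subst hx; subst hy; exact absurd rfl hxy
      by_cases h3 : M = {b}
      · subst h3
        refine ⟨Finset.singleton_subset_iff.2 hb, ?_⟩
        intro x hx y hy hxy
        simp only [Finset.mem_singleton] at hx hy
        subst hx; subst hy; exact absurd rfl hxy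
      by_cases h4 : M = ({a, b})
      · subst h4
        refine ⟨?_, ?_⟩
        · intro f hf
          simp only [Finset.mem_insert, Finset.mem_singleton] at hf
          rcases hf with rfl | rfl
          · exact ha
          · exact hb
        · intro x hx y hy hxy
          simp only [Finset.mem_insert, Finset.mem_singleton] at hx hy
          rcases hx with rfl | rfl <;> rcases hy with rfl | rfl
          · exact absurd rfl hxy
          · exact hd
          · exact hd.symm
          · exact absurd rfl hxy
      · rw [hρ M h1 h2 h3 h4] at hM
        exact hsupp M hM
    · intro e he
      have hsplit : ∑ M ∈ univ.filter (fun M => e ∈ M), ν M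
          = ∑ M ∈ univ.filter (fun M => e ∈ M), μ M
            + ∑ M ∈ univ.filter (fun M => e ∈ M), (ν M - μ M) := by
        rw [← Finset.sum_add_distrib]
        exact Finset.sum_congr rfl (fun M _ => by ring)
      have hcorr : ∑ M ∈ univ.filter (fun M => e ∈ M), (ν M - μ M) = 0 := by
        rw [sum_loc_filter (fun M => e ∈ M) (fun M => ν M - μ M) L4 ?_]
        · rw [Finset.sum_filter, hL4sum (fun M => if e ∈ M then ν M - μ M else 0)]
          rw [hν1, hν2, hν3, hν4, ← hzdef, ← hudef, ← hvdef, ← hwdef]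
          simp only [Finset.notMem_empty, if_false, Finset.mem_singleton, Finset.mem_insert]
          by_cases h1 : e = a <;> by_cases h2 : e = b
          · exact absurd (h1.symm.trans h2) hab
          · simp only [h1, h2, if_true, if_false, eq_self_iff_true, true_or, or_false,
              if_neg hab]
            by_cases hba : a = b
            · exact absurd hba hab
            · simp [hba]
          · simp only [h2, if_true, if_pos, eq_self_iff_true, or_true]
            by_cases hba : b = a
            · exact absurd hba.symm hab
            · simp [h1, hba]
          · simp [h1, h2]
        · intro M hM
          by_contra hnot
          exact hM (by show _ - _ = (0:ℝ); rw [hL4mem M hnot]; ring)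
      rw [hsplit, hcorr, hmarg e he]; ring
  -- entropy strictly increases: contradiction
  have hzd : 0 < z - d := by linarith
  have hwd : 0 < w - d := by linarith
  have hdiffsum : ∑ M : Finset (Finset (Fin 4)),
      (μ M * Real.log (μ M) - ν M * Real.log (ν M))
      = (z * Real.log z - (z - d) * Real.log (z - d))
        + (u * Real.log u - (u + d) * Real.log (u + d))
        + (v * Real.log v - (v + d) * Real.log (v + d))
        + (w * Real.log w - (w - d) * Real.log (w - d)) := by
    rw [sum_loc (fun M => μ M * Real.log (μ M) - ν M * Real.log (ν M)) L4 ?_]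
    · rw [hL4sum (fun M => μ M * Real.log (μ M) - ν M * Real.log (ν M))]
      rw [hν1, hν2, hν3, hν4, ← hzdef, ← hudef, ← hvdef, ← hwdef]
    · intro M hM
      by_contra hnot
      exact hM (by show _ - _ = (0:ℝ); rw [hL4mem M hnot]; ring)
  have e1 := flog_lower z d hz hdpos (by linarith)
  have e4 := flog_lower w d hw hdpos (by linarith)
  have e2 := flog_upper u d hu0 hdpos
  have e3 := flog_upper v d hv0 hdpos
  have harg : (u + d) * (v + d) < (z - d) * (w - d) := by
    rw [hSdef] at hdγ
    rw [hγdef] at hdγ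
    nlinarith [hdγ, hdpos]
  have hlog : Real.log ((u + d) * (v + d)) < Real.log ((z - d) * (w - d)) :=
    Real.log_lt_log (by positivity) harg
  rw [Real.log_mul (by positivity) (by positivity),
    Real.log_mul (ne_of_gt hzd) (ne_of_gt hwd)] at hlog
  have hsum4 : 0 < (z * Real.log z - (z - d) * Real.log (z - d))
      + (u * Real.log u - (u + d) * Real.log (u + d))
      + (v * Real.log v - (v + d) * Real.log (v + d))
      + (w * Real.log w - (w - d) * Real.log (w - d)) := by
    have hmul : 0 < d * ((Real.log (z - d) + Real.log (w - d))
        - (Real.log (u + d) + Real.log (v + d))) :=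
      mul_pos hdpos (by linarith)
    nlinarith [e1, e2, e3, e4, hmul]
  have hent : entropy ν - entropy μ = ∑ M : Finset (Finset (Fin 4)),
      (μ M * Real.log (μ M) - ν M * Real.log (ν M)) := by
    simp only [entropy]
    rw [Finset.sum_sub_distrib]
    ring
  have := hmax ν hνfeas
  rw [hdiffsum] at hent
  linarith

lemma sq_bridge (A B K : ℝ) (hA : K ≤ A^2) (hB : K ≤ B^2) (hK : 0 ≤ K)
    (hA0 : 0 ≤ A) (hB0 : 0 ≤ B) : K ≤ A*B := by
  have hsA : Real.sqrt K ≤ A := by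
    rw [show A = Real.sqrt (A^2) from (Real.sqrt_sq hA0).symm]
    exact Real.sqrt_le_sqrt hA
  have hsB : Real.sqrt K ≤ B := by
    rw [show B = Real.sqrt (B^2) from (Real.sqrt_sq hB0).symm]
    exact Real.sqrt_le_sqrt hB
  calc K = Real.sqrt K * Real.sqrt K := (Real.mul_self_sqrt hK).symm
    _ ≤ A * B := mul_le_mul hsA hsB (Real.sqrt_nonneg _) hA0

lemma cz_step (z u w c : ℝ) (hG : z*w ≤ u*u) (hm : u + w = c) :
    c*z ≤ u*z + u*u := by
  have h : (u + w) * z = c * z := by rw [hm]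
  nlinarith [hG, h]

lemma quad_step (z u1 u2 c : ℝ) (hz : 0 ≤ z) (hu1 : 0 ≤ u1) (hu2 : 0 ≤ u2) (hc : 0 ≤ c)
    (h1 : c*z ≤ u1*z + u1*u1) (h2 : c*z ≤ u2*z + u2*u2)
    (h3 : z + u1 + u2 + 2*c ≤ 1) : z^2 + 4*c*z ≤ (1-2*c)^2 := by
  have hA : z^2 + 4*c*z ≤ (2*u1+z)^2 := by nlinarith
  have hB : z^2 + 4*c*z ≤ (2*u2+z)^2 := by nlinarith
  have hK : 0 ≤ z^2 + 4*c*z := by nlinarith [mul_nonneg hc hz, sq_nonneg z]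
  have hAB := sq_bridge (2*u1+z) (2*u2+z) _ hA hB hK (by linarith) (by linarith)
  have h1c : 0 ≤ 1 - 2*c := by linarith
  nlinarith [hAB, sq_nonneg (u1-u2), h3, h1c, hz, hu1, hu2]

lemma mono_step (z z0 c R : ℝ) (h : z^2 + 4*c*z ≤ R) (hz0 : 0 ≤ z0) (hzz : z0 ≤ z)
    (hc : 0 ≤ c) : z0^2 + 4*c*z0 ≤ R := by nlinarith

lemma alg_final (α ε δ : ℝ) (hδ : 0 < δ) (hε : 0 < ε) (hεδ : ε < δ/20) (hε2 : ε < 1/2)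
    (hα : 0 < α) (hα1 : α < 1)
    (hfin : (α*(1-2*ε))^2 + 4*(α*((1-ε)/2))*(α*(1-2*ε)) ≤ (1 - 2*(α*((1-ε)/2)))^2) :
    α ≤ (Real.sqrt 3 - 1)/2 + δ := by
  by_contra hcon
  push_neg at hcon
  have hs3 : Real.sqrt 3 ^ 2 = 3 := Real.sq_sqrt (by norm_num)
  have hs1 : 1 ≤ Real.sqrt 3 := by nlinarith [Real.sqrt_nonneg 3]
  have hq : 2*α^2 + 2*α - 1 ≤ 10*ε := by
    nlinarith [hfin, mul_pos hα hε, sq_nonneg (α*ε),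
      mul_le_mul_of_nonneg_right hα1.le hε.le,
      mul_nonneg (mul_nonneg hα.le hα.le) hε.le,
      mul_le_mul_of_nonneg_right (mul_le_mul_of_nonneg_right hα1.le hα.le) hε.le,
      mul_nonneg (mul_nonneg (mul_nonneg hα.le hα.le) hε.le) hε.le]
  have hlb : 2*δ ≤ 2*α^2 + 2*α - 1 := by
    nlinarith [hcon, hδ, hs3, hs1, hα,
      mul_pos (show (0:ℝ) < α - (Real.sqrt 3 - 1)/2 by nlinarith)
        (show (0:ℝ) < α + (Real.sqrt 3 - 1)/2 + 1 by nlinarith)]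
  linarith

open Stmt18 in
theorem stmt_18 :
    ∀ δ : ℝ, 0 < δ → ∃ ε0 : ℝ, 0 < ε0 ∧
      ∀ ε : ℝ, 0 < ε → ε < ε0 → ε < 1 / 2 →
      ∀ α : ℝ, 0 < α → α < 1 →
      ∀ μ : Finset (Finset (Fin 4)) → ℝ,
        -- μ is the maximum-entropy distribution over matchings with marginals α·x(ε)
        Feasible ε α μ →
        (∀ ν, Feasible ε α ν → entropy ν ≤ entropy μ) →
        -- if μ satisfies the stationary implementability constraints
        (∀ e ∈ edges, ∀ T : Finset (Finset (Fin 4)),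
          IsK4Matching T → e ∉ T → 0 < μ T + μ (insert e T) →
          μ (insert e T) / (μ T + μ (insert e T)) ≤ xvec ε e) →
        -- then α is (up to δ) at most (√3 − 1)/2
        α ≤ (Real.sqrt 3 - 1) / 2 + δ := by
  intro δ hδ
  refine ⟨δ / 20, by positivity, ?_⟩
  intro ε hε hεδ hε2 α hα hα1 μ hfeas hmax hcons
  obtain ⟨hpos, hsum, hsupp, hmarg⟩ := hfeas
  have hfeas' : Feasible ε α μ := ⟨hpos, hsum, hsupp, hmarg⟩
  -- xvec values
  have x01 : xvec ε ({0,1} : Finset (Fin 4)) = (1-ε)/2 := by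
    simp only [xvec]; rw [if_neg (by decide)]
  have x23 : xvec ε ({2,3} : Finset (Fin 4)) = (1-ε)/2 := by
    simp only [xvec]; rw [if_neg (by decide)]
  have x12 : xvec ε ({1,2} : Finset (Fin 4)) = (1-ε)/2 := by
    simp only [xvec]; rw [if_neg (by decide)]
  have x30 : xvec ε ({3,0} : Finset (Fin 4)) = (1-ε)/2 := by
    simp only [xvec]; rw [if_neg (by decide)]
  have x13 : xvec ε ({1,3} : Finset (Fin 4)) = ε := by
    simp only [xvec]; rw [if_pos (by decide)]
  have x02 : xvec ε ({0,2} : Finset (Fin 4)) = ε := by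
    simp only [xvec]; rw [if_pos (by decide)]
  -- marginal equations
  have m01 : μ {({0,1} : Finset (Fin 4))} + μ {({0,1} : Finset (Fin 4)), {2,3}}
      = α * ((1-ε)/2) := by
    have h := hmarg {0,1} (by decide)
    rw [marg_two μ hsupp {0,1} {2,3} (by decide) (by decide), x01] at h
    exact h
  have m23 : μ {({2,3} : Finset (Fin 4))} + μ {({0,1} : Finset (Fin 4)), {2,3}}
      = α * ((1-ε)/2) := by
    have h := hmarg {2,3} (by decide)
    rw [marg_two μ hsupp {2,3} {0,1} (by decide) (by decide), x23,
      Finset.pair_comm ({2,3} : Finset (Fin 4)) {0,1}] at h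
    exact h
  have m12 : μ {({1,2} : Finset (Fin 4))} + μ {({1,2} : Finset (Fin 4)), {3,0}}
      = α * ((1-ε)/2) := by
    have h := hmarg {1,2} (by decide)
    rw [marg_two μ hsupp {1,2} {3,0} (by decide) (by decide), x12] at h
    exact h
  have m30 : μ {({3,0} : Finset (Fin 4))} + μ {({1,2} : Finset (Fin 4)), {3,0}}
      = α * ((1-ε)/2) := by
    have h := hmarg {3,0} (by decide)
    rw [marg_two μ hsupp {3,0} {1,2} (by decide) (by decide), x30,
      Finset.pair_comm ({3,0} : Finset (Fin 4)) {1,2}] at h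
    exact h
  have md : μ {({1,3} : Finset (Fin 4))} + μ {({0,2} : Finset (Fin 4)), {1,3}}
      = α * ε := by
    have h := hmarg {1,3} (by decide)
    rw [marg_two μ hsupp {1,3} {0,2} (by decide) (by decide), x13,
      Finset.pair_comm ({1,3} : Finset (Fin 4)) {0,2}] at h
    exact h
  have hαε : 0 < α * ε := mul_pos hα hε
  -- implementability constraints on the diagonal
  have hC2 : μ {({0,2} : Finset (Fin 4)), {1,3}} * (1 - ε)
      ≤ ε * μ {({1,3} : Finset (Fin 4))} := by
    have hp : 0 < μ {({1,3} : Finset (Fin 4))} + μ {({0,2} : Finset (Fin 4)), {1,3}} := by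
      linarith [md, hαε]
    have h := hcons {0,2} (by decide) {{1,3}} ⟨by decide, by decide⟩ (by decide) hp
    rw [x02, div_le_iff₀ hp] at h
    linarith [h]
  have hins1 : insert ({1,3} : Finset (Fin 4)) (∅ : Finset (Finset (Fin 4)))
      = {({1,3} : Finset (Fin 4))} := by decide
  have hC1 : μ {({1,3} : Finset (Fin 4))} * (1 - ε) ≤ ε * μ ∅ := by
    by_cases hp : 0 < μ (∅ : Finset (Finset (Fin 4))) + μ {({1,3} : Finset (Fin 4))}
    · have h := hcons {1,3} (by decide) ∅ ⟨by decide, by decide⟩ (by decide)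
        (by rw [hins1]; exact hp)
      rw [hins1, x13, div_le_iff₀ hp] at h
      linarith [h]
    · exfalso
      push_neg at hp
      have hv0 : μ {({1,3} : Finset (Fin 4))} = 0 :=
        le_antisymm (by linarith [hpos (∅ : Finset (Finset (Fin 4)))])
          (hpos {({1,3} : Finset (Fin 4))})
      have hd0 : μ {({0,2} : Finset (Fin 4)), {1,3}} ≤ 0 := by
        nlinarith [hC2, hpos {({0,2} : Finset (Fin 4)), {1,3}}, hε2, hv0]
      linarith [md, hαε, hv0, hd0]
  -- lower bound on μ ∅
  have hzlb : α * (1 - 2*ε) ≤ μ ∅ := by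
    have hvle : μ {({1,3} : Finset (Fin 4))} ≤ α * ε := by
      linarith [hpos {({0,2} : Finset (Fin 4)), {1,3}}, md]
    have h2 : ε * μ {({1,3} : Finset (Fin 4))} ≤ ε * (α * ε) :=
      mul_le_mul_of_nonneg_left hvle hε.le
    have md1 : (μ {({1,3} : Finset (Fin 4))} + μ {({0,2} : Finset (Fin 4)), {1,3}}) * (1-ε)
        = α * ε * (1-ε) := by rw [md]
    have key : ε * (α * (1 - 2*ε)) ≤ ε * μ ∅ := by nlinarith [hC1, hC2, md1, h2]
    exact le_of_mul_le_mul_left key hε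
  -- Gibbs inequalities from entropy maximality
  have G1 := gibbs_ineq ε α μ hfeas' hmax {0,1} {2,3} (by decide) (by decide)
    (by decide) (by decide)
  have G2 := gibbs_ineq ε α μ hfeas' hmax {1,2} {3,0} (by decide) (by decide)
    (by decide) (by decide)
  -- total mass bound
  have htot : μ ∅ + μ {({0,1} : Finset (Fin 4))} + μ {({2,3} : Finset (Fin 4))}
      + μ {({1,2} : Finset (Fin 4))} + μ {({3,0} : Finset (Fin 4))}
      + μ {({0,1} : Finset (Fin 4)), {2,3}} + μ {({1,2} : Finset (Fin 4)), {3,0}} ≤ 1 := by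
    rw [← hsum]
    have h := Finset.sum_le_sum_of_subset_of_nonneg
      (Finset.subset_univ ({∅, {({0,1} : Finset (Fin 4))}, {({2,3} : Finset (Fin 4))},
        {({1,2} : Finset (Fin 4))}, {({3,0} : Finset (Fin 4))},
        {({0,1} : Finset (Fin 4)), {2,3}}, {({1,2} : Finset (Fin 4)), {3,0}}} :
        Finset (Finset (Finset (Fin 4)))))
      (fun M _ _ => hpos M)
    refine le_trans (le_of_eq ?_) h
    rw [Finset.sum_insert (by decide), Finset.sum_insert (by decide),
      Finset.sum_insert (by decide), Finset.sum_insert (by decide),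
      Finset.sum_insert (by decide), Finset.sum_insert (by decide),
      Finset.sum_singleton]
    ring
  -- algebra
  have hz0 : 0 ≤ μ ∅ := hpos _
  have hu10 : 0 ≤ μ {({0,1} : Finset (Fin 4))} := hpos _
  have hu20 : 0 ≤ μ {({1,2} : Finset (Fin 4))} := hpos _
  have hu1e : μ {({2,3} : Finset (Fin 4))} = μ {({0,1} : Finset (Fin 4))} := by linarith
  have hu2e : μ {({3,0} : Finset (Fin 4))} = μ {({1,2} : Finset (Fin 4))} := by linarith
  rw [hu1e] at G1
  rw [hu2e] at G2
  have hc0 : 0 ≤ α * ((1-ε)/2) := by nlinarith [hα.le, hε2]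
  have hcz1 := cz_step (μ ∅) (μ {({0,1} : Finset (Fin 4))})
    (μ {({0,1} : Finset (Fin 4)), {2,3}}) (α * ((1-ε)/2)) G1 m01
  have hcz2 := cz_step (μ ∅) (μ {({1,2} : Finset (Fin 4))})
    (μ {({1,2} : Finset (Fin 4)), {3,0}}) (α * ((1-ε)/2)) G2 m12
  have hsum1 : μ ∅ + μ {({0,1} : Finset (Fin 4))} + μ {({1,2} : Finset (Fin 4))}
      + 2*(α * ((1-ε)/2)) ≤ 1 := by linarith [htot, m01, m12]
  have hquad := quad_step (μ ∅) (μ {({0,1} : Finset (Fin 4))})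
    (μ {({1,2} : Finset (Fin 4))}) (α * ((1-ε)/2)) hz0 hu10 hu20 hc0 hcz1 hcz2 hsum1
  have hz00 : 0 ≤ α * (1 - 2*ε) := by nlinarith [hα.le, hε2]
  have hfin2 := mono_step (μ ∅) (α * (1 - 2*ε)) (α * ((1-ε)/2)) _ hquad hz00 hzlb hc0
  exact alg_final α ε δ hδ hε hεδ hε2 hα hα1 hfin2
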